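/- Define h(θ) = (cos θ + √3·sin θ + √(10 − cos(2θ) + √3·sin(2θ)))/(2√2). Then ∫₀^{π/3} (6h(θ)⁴ + 8√2·h(θ)³·cos θ + 3h(θ)²·(1 + cos(2θ)) + (3 + cos(2θ))) / (18π·(1 + h(θ)²)³) dθ = (1/24)·(1/3)·(1 + (3 + √3)/π). -/

import Mathlib

open Real

/-- `h(θ) = (cos θ + √3 sin θ + √(10 − cos 2θ + √3 sin 2θ)) / (2√2)`. -/
noncomputable def h (θ : ℝ) : ℝ :=
  (Real.cos θ + Real.sqrt 3 * Real.sin θ +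
    Real.sqrt (10 - Real.cos (2 * θ) + Real.sqrt 3 * Real.sin (2 * θ))) / (2 * Real.sqrt 2)

noncomputable def qq (u : ℝ) : ℝ := Real.sqrt (2 + Real.cos u ^ 2)

lemma qq_sq (u : ℝ) : qq u ^ 2 = 2 + Real.cos u ^ 2 := Real.sq_sqrt (by positivity)

lemma qq_pos (u : ℝ) : 0 < qq u := Real.sqrt_pos.mpr (by positivity)

/-- The simplified integrand, as a function of `θ` (with `u = θ − π/3`). -/
noncomputable def gg (t : ℝ) : ℝ :=
  (1 + Real.cos (2 * t) / 3 +
    (2 * qq (t - π/3) ^ 4 * (Real.cos (t - π/3) + Real.sqrt 3 * Real.sin (t - π/3))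
      - qq (t - π/3) ^ 2 * (2 * Real.sqrt 3 * Real.sin (t - π/3) + 9 * Real.cos (t - π/3))
      + (9 * Real.cos (t - π/3) - 12 * Real.sqrt 3 * Real.sin (t - π/3)))
        / (6 * qq (t - π/3) ^ 3)) / (12 * π)

/-- Antiderivative of the `u`-part. -/
noncomputable def FF (u : ℝ) : ℝ :=
  Real.sin u * qq u / 6 - Real.sqrt 3 * Real.cos u * qq u / 6
    - Real.arcsin (Real.sin u / Real.sqrt 3)
    + Real.sin u / (2 * qq u) + Real.sqrt 3 * Real.cos u / qq u

/-- Full antiderivative. -/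
noncomputable def PP (t : ℝ) : ℝ := (t + Real.sin (2 * t) / 6 + FF (t - π/3)) / (12 * π)

lemma cos_theta_eq (θ : ℝ) :
    Real.cos θ = (Real.cos (θ - π/3) - Real.sqrt 3 * Real.sin (θ - π/3)) / 2 := by
  have hb : Real.sqrt 3 ^ 2 = 3 := Real.sq_sqrt (by norm_num)
  rw [Real.cos_sub, Real.sin_sub, Real.cos_pi_div_three, Real.sin_pi_div_three]
  linear_combination (-(Real.cos θ)/4) * hb

lemma h_alt (θ : ℝ) :
    h θ = (Real.cos (θ - π/3) + qq (θ - π/3)) / Real.sqrt 2 := by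
  have hb : Real.sqrt 3 ^ 2 = 3 := Real.sq_sqrt (by norm_num)
  have hpy : Real.sin θ ^ 2 + Real.cos θ ^ 2 = 1 := Real.sin_sq_add_cos_sq θ
  have h1 : 10 - Real.cos (2 * θ) + Real.sqrt 3 * Real.sin (2 * θ)
      = 4 * (2 + Real.cos (θ - π/3) ^ 2) := by
    rw [Real.cos_two_mul, Real.sin_two_mul, Real.cos_sub, Real.cos_pi_div_three,
      Real.sin_pi_div_three]
    linear_combination (-3) * hpy + (-(Real.sin θ^2)) * hb
  have h2 : Real.cos θ + Real.sqrt 3 * Real.sin θ = 2 * Real.cos (θ - π/3) := by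
    rw [Real.cos_sub, Real.cos_pi_div_three, Real.sin_pi_div_three]; ring
  have h3 : Real.sqrt (4 * (2 + Real.cos (θ - π/3) ^ 2)) = 2 * qq (θ - π/3) := by
    rw [Real.sqrt_mul (by norm_num), show (4:ℝ) = 2^2 by norm_num,
      Real.sqrt_sq (by norm_num)]; rfl
  rw [h, h1, h3, h2, div_eq_div_iff (by positivity) (by positivity)]
  ring

lemma pointwise (θ : ℝ) :
    (6 * h θ ^ 4 + 8 * Real.sqrt 2 * h θ ^ 3 * Real.cos θ
          + 3 * h θ ^ 2 * (1 + Real.cos (2 * θ)) + (3 + Real.cos (2 * θ)))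
        / (18 * π * (1 + h θ ^ 2) ^ 3) = gg θ := by
  have hb : Real.sqrt 3 ^ 2 = 3 := Real.sq_sqrt (by norm_num)
  have ha : Real.sqrt 2 ^ 2 = 2 := Real.sq_sqrt (by norm_num)
  have hQ : qq (θ - π/3) ^ 2 = 2 + Real.cos (θ - π/3) ^ 2 := qq_sq _
  have hQpos : 0 < qq (θ - π/3) := qq_pos _
  have hs : Real.sin (θ - π/3) ^ 2 = 1 - Real.cos (θ - π/3) ^ 2 := by
    linear_combination Real.sin_sq_add_cos_sq (θ - π/3)
  have hH1 : Real.sqrt 2 * h θ = qq (θ - π/3) + Real.cos (θ - π/3) := by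
    rw [h_alt, mul_div_cancel₀ _ (by positivity : Real.sqrt 2 ≠ 0)]
    ring
  have hH2 : h θ ^ 2 = (qq (θ - π/3) + Real.cos (θ - π/3)) ^ 2 / 2 := by
    have : (Real.sqrt 2 * h θ) ^ 2 = (qq (θ - π/3) + Real.cos (θ - π/3)) ^ 2 := by
      rw [hH1]
    nlinarith [this, ha]
  have hhq : 1 + h θ ^ 2 = qq (θ - π/3) * (qq (θ - π/3) + Real.cos (θ - π/3)) := by
    rw [hH2]; linear_combination (-1/2) * hQ
  have hgg : gg θ = (6 * qq (θ - π/3)^3 + 2 * Real.cos (2*θ) * qq (θ - π/3)^3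
      + (2 * qq (θ - π/3)^4 * (Real.cos (θ - π/3) + Real.sqrt 3 * Real.sin (θ - π/3))
        - qq (θ - π/3)^2 * (2 * Real.sqrt 3 * Real.sin (θ - π/3) + 9 * Real.cos (θ - π/3))
        + (9 * Real.cos (θ - π/3) - 12 * Real.sqrt 3 * Real.sin (θ - π/3))))
      / (72 * π * qq (θ - π/3)^3) := by
    rw [gg]
    generalize θ - π/3 = u
    have h12 : (12:ℝ) * π ≠ 0 := by positivity
    have h6 : qq u ≠ 0 := ne_of_gt (qq_pos u)
    field_simp
    ring
  have hQc : 0 < qq (θ - π/3) + Real.cos (θ - π/3) := by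
    nlinarith [hQ, hQpos, Real.neg_one_le_cos (θ - π/3), Real.cos_le_one (θ - π/3)]
  rw [hgg, hhq, Real.cos_two_mul, cos_theta_eq θ,
    div_eq_div_iff (by positivity) (by positivity)]
  set c := Real.cos (θ - π/3)
  set s := Real.sin (θ - π/3)
  set Q := qq (θ - π/3)
  set a := Real.sqrt 2
  set b := Real.sqrt 3
  set P := π
  set H := h θ
  linear_combination
    ((432:ℝ)*Q^3*P*H^2 + (216:ℝ)*Q^5*P + (-288:ℝ)*s*Q^3*a*b*P*H + (108:ℝ)*s^2*Q^3*b^2*P + (288:ℝ)*c*Q^3*a*P*H + (432:ℝ)*c*Q^4*P + (-216:ℝ)*c*s*Q^3*b*P + (324:ℝ)*c^2*Q^3*P) * hH2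
    + ((-144:ℝ)*s*Q^5*b*P + (144:ℝ)*c*Q^5*P + (-288:ℝ)*c*s*Q^4*b*P + (288:ℝ)*c^2*Q^4*P + (-144:ℝ)*c^2*s*Q^3*b*P + (144:ℝ)*c^3*Q^3*P) * hH1
    + ((36:ℝ)*s^2*Q^3*P + (54:ℝ)*s^2*Q^5*P + (-18:ℝ)*s^2*Q^9*P + (108:ℝ)*c*s^2*Q^4*P + (-54:ℝ)*c*s^2*Q^8*P + (54:ℝ)*c^2*s^2*Q^3*P + (-54:ℝ)*c^2*s^2*Q^7*P + (-18:ℝ)*c^3*s^2*Q^6*P) * hb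
    + ((-72:ℝ)*Q^3*P + (-36:ℝ)*Q^5*P + (-72:ℝ)*Q^7*P + (-36:ℝ)*s*Q^6*b*P + (-36:ℝ)*s*Q^8*b*P + (-54:ℝ)*s^2*Q^3*P + (-108:ℝ)*s^2*Q^5*P + (-54:ℝ)*s^2*Q^7*P + (648:ℝ)*c*P + (324:ℝ)*c*Q^2*P + (162:ℝ)*c*Q^4*P + (-126:ℝ)*c*Q^6*P + (-36:ℝ)*c*Q^8*P + (36:ℝ)*c*s*Q^3*b*P + (-36:ℝ)*c*s*Q^5*b*P + (-72:ℝ)*c*s*Q^7*b*P + (-648:ℝ)*c*s^2*P + (-324:ℝ)*c*s^2*Q^2*P + (-324:ℝ)*c*s^2*Q^4*P + (-162:ℝ)*c*s^2*Q^6*P + (972:ℝ)*c^2*Q*P + (504:ℝ)*c^2*Q^3*P + (-54:ℝ)*c^2*Q^5*P + (-126:ℝ)*c^2*Q^7*P + (-36:ℝ)*c^2*s*Q^6*b*P + (-972:ℝ)*c^2*s^2*Q*P + (-540:ℝ)*c^2*s^2*Q^3*P + (-216:ℝ)*c^2*s^2*Q^5*P + (1188:ℝ)*c^3*P + (432:ℝ)*c^3*Q^2*P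 + (-108:ℝ)*c^3*Q^4*P + (-198:ℝ)*c^3*Q^6*P + (-1836:ℝ)*c^3*s^2*P + (-756:ℝ)*c^3*s^2*Q^2*P + (-216:ℝ)*c^3*s^2*Q^4*P + (-324:ℝ)*c^4*Q^3*P + (-216:ℝ)*c^4*Q^5*P + (-972:ℝ)*c^4*s^2*Q*P + (-216:ℝ)*c^4*s^2*Q^3*P + (-648:ℝ)*c^5*P + (-540:ℝ)*c^5*Q^2*P + (-216:ℝ)*c^5*Q^4*P + (-1188:ℝ)*c^5*s^2*P + (-216:ℝ)*c^5*s^2*Q^2*P + (-756:ℝ)*c^6*Q*P + (-216:ℝ)*c^6*Q^3*P + (-216:ℝ)*c^6*s^2*Q*P + (-972:ℝ)*c^7*P + (-216:ℝ)*c^7*Q^2*P + (-216:ℝ)*c^7*s^2*P + (-216:ℝ)*c^8*Q*P + (-216:ℝ)*c^9*P) * hQ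
    + ((-1296:ℝ)*c*P + (-1944:ℝ)*c^2*Q*P + (-4320:ℝ)*c^3*P + (-2916:ℝ)*c^4*Q*P + (-1404:ℝ)*c^6*Q*P + (-4212:ℝ)*c^5*P + (-1620:ℝ)*c^7*P + (-216:ℝ)*c^8*Q*P + (-216:ℝ)*c^9*P) * hs

lemma hasDeriv_FF (u : ℝ) :
    HasDerivAt FF
      ((2 * qq u ^ 4 * (Real.cos u + Real.sqrt 3 * Real.sin u)
        - qq u ^ 2 * (2 * Real.sqrt 3 * Real.sin u + 9 * Real.cos u)
        + (9 * Real.cos u - 12 * Real.sqrt 3 * Real.sin u)) / (6 * qq u ^ 3)) u := by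
  have hQ : qq u ^ 2 = 2 + Real.cos u ^ 2 := qq_sq u
  have hQpos : 0 < qq u := qq_pos u
  have hQne : qq u ≠ 0 := ne_of_gt hQpos
  have hs : Real.sin u ^ 2 = 1 - Real.cos u ^ 2 := by
    linear_combination Real.sin_sq_add_cos_sq u
  have hb : Real.sqrt 3 ^ 2 = 3 := Real.sq_sqrt (by norm_num)
  have hbpos : (0:ℝ) < Real.sqrt 3 := by positivity
  have hc : HasDerivAt Real.cos (-Real.sin u) u := Real.hasDerivAt_cos u
  have hsin : HasDerivAt Real.sin (Real.cos u) u := Real.hasDerivAt_sin u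
  have hinner : HasDerivAt (fun x => 2 + Real.cos x ^ 2)
      ((2:ℕ) * Real.cos u ^ 1 * -Real.sin u) u := (hc.pow 2).const_add 2
  have hq : HasDerivAt (fun x => qq x) (-(Real.cos u * Real.sin u) / qq u) u := by
    have h0 : (2 + Real.cos u ^ 2) ≠ 0 := by positivity
    have := (Real.hasDerivAt_sqrt h0).comp u hinner
    refine this.congr_deriv ?_
    rw [show Real.sqrt (2 + Real.cos u ^ 2) = qq u from rfl]
    field_simp
    ring
  have harc : HasDerivAt (fun x => Real.arcsin (Real.sin x / Real.sqrt 3))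
      (Real.cos u / qq u) u := by
    have h13 : (1:ℝ) < Real.sqrt 3 := by
      nlinarith [Real.sq_sqrt (show (0:ℝ) ≤ 3 by norm_num), Real.sqrt_nonneg 3]
    have hlt : |Real.sin u / Real.sqrt 3| < 1 := by
      rw [abs_div, abs_of_pos hbpos, div_lt_one hbpos]
      linarith [abs_sin_le_one u]
    have h1 : Real.sin u / Real.sqrt 3 ≠ -1 := by
      intro hcon; rw [hcon] at hlt; norm_num at hlt
    have h2 : Real.sin u / Real.sqrt 3 ≠ 1 := by
      intro hcon; rw [hcon] at hlt; norm_num at hlt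
    have := (Real.hasDerivAt_arcsin h1 h2).comp u (hsin.div_const (Real.sqrt 3))
    refine this.congr_deriv ?_
    have e1 : 1 - (Real.sin u / Real.sqrt 3) ^ 2 = qq u ^ 2 / Real.sqrt 3 ^ 2 := by
      rw [hQ, div_pow, hb]
      linear_combination (-1/3) * hs
    rw [e1, Real.sqrt_div (by positivity), Real.sqrt_sq hQpos.le, Real.sqrt_sq hbpos.le]
    field_simp
  have t1 : HasDerivAt (fun x => Real.sin x * qq x / 6)
      ((Real.cos u * qq u + Real.sin u * (-(Real.cos u * Real.sin u) / qq u)) / 6) u :=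
    (hsin.mul hq).div_const 6
  have t2 : HasDerivAt (fun x => Real.sqrt 3 * Real.cos x * qq x / 6)
      ((Real.sqrt 3 * -Real.sin u * qq u
        + Real.sqrt 3 * Real.cos u * (-(Real.cos u * Real.sin u) / qq u)) / 6) u :=
    (((hc.const_mul (Real.sqrt 3)).mul hq)).div_const 6
  have t4 : HasDerivAt (fun x => Real.sin x / (2 * qq x))
      ((Real.cos u * (2 * qq u) - Real.sin u * (2 * (-(Real.cos u * Real.sin u) / qq u)))
        / (2 * qq u) ^ 2) u :=
    hsin.div (hq.const_mul 2) (by positivity)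
  have t5 : HasDerivAt (fun x => Real.sqrt 3 * Real.cos x / qq x)
      ((Real.sqrt 3 * -Real.sin u * qq u
        - Real.sqrt 3 * Real.cos u * (-(Real.cos u * Real.sin u) / qq u)) / qq u ^ 2) u :=
    (hc.const_mul (Real.sqrt 3)).div hq hQne
  have total := (((t1.sub t2).sub harc).add t4).add t5
  have : HasDerivAt FF
      ((Real.cos u * qq u + Real.sin u * (-(Real.cos u * Real.sin u) / qq u)) / 6
        - (Real.sqrt 3 * -Real.sin u * qq u
            + Real.sqrt 3 * Real.cos u * (-(Real.cos u * Real.sin u) / qq u)) / 6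
        - Real.cos u / qq u
        + (Real.cos u * (2 * qq u) - Real.sin u * (2 * (-(Real.cos u * Real.sin u) / qq u)))
            / (2 * qq u) ^ 2
        + (Real.sqrt 3 * -Real.sin u * qq u
            - Real.sqrt 3 * Real.cos u * (-(Real.cos u * Real.sin u) / qq u)) / qq u ^ 2) u := by
    exact total
  convert this using 1
  set c := Real.cos u
  set s := Real.sin u
  set Q := qq u
  set b := Real.sqrt 3
  field_simp
  rw [hQ, hs]
  ring

/-- The outer integral over `θ ∈ [0, π/3]` evaluates to `1/24` of the mean square width
`(1/3)(1 + (3+√3)/π)` of the unit-edge regular tetrahedron. -/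
theorem tetra_outer_integral :
    ∫ θ in (0:ℝ)..(π / 3),
      (6 * h θ ^ 4 + 8 * Real.sqrt 2 * h θ ^ 3 * Real.cos θ
          + 3 * h θ ^ 2 * (1 + Real.cos (2 * θ)) + (3 + Real.cos (2 * θ)))
        / (18 * π * (1 + h θ ^ 2) ^ 3)
      = (1/24) * ((1/3) * (1 + (3 + Real.sqrt 3) / π)) := by
  have hπ : (0:ℝ) < π := Real.pi_pos
  have hcont : Continuous gg := by
    have hqc : Continuous fun u : ℝ => qq u := by
      apply Real.continuous_sqrt.comp
      exact continuous_const.add (Real.continuous_cos.pow 2)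
    have hsh : Continuous fun t : ℝ => t - π/3 := continuous_id.sub continuous_const
    apply Continuous.div_const
    apply Continuous.add
    · apply Continuous.add continuous_const
      exact ((Real.continuous_cos.comp (continuous_const.mul continuous_id)).div_const 3)
    · apply Continuous.div
      · fun_prop
      · exact (continuous_const.mul (((hqc.comp hsh)).pow 3))
      · intro t
        have := qq_pos (t - π/3)
        positivity
  have hder : ∀ t ∈ Set.uIcc (0:ℝ) (π/3), HasDerivAt PP (gg t) t := by
    intro t _
    have h1 : HasDerivAt (fun x : ℝ => x) 1 t := hasDerivAt_id t
    have h2 : HasDerivAt (fun x : ℝ => Real.sin (2*x)) (Real.cos (2*t) * (2*1)) t :=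
      (Real.hasDerivAt_sin (2*t)).comp t ((hasDerivAt_id t).const_mul 2)
    have h3 : HasDerivAt (fun x : ℝ => FF (x - π/3))
        ((2 * qq (t - π/3) ^ 4 * (Real.cos (t - π/3) + Real.sqrt 3 * Real.sin (t - π/3))
          - qq (t - π/3) ^ 2 * (2 * Real.sqrt 3 * Real.sin (t - π/3) + 9 * Real.cos (t - π/3))
          + (9 * Real.cos (t - π/3) - 12 * Real.sqrt 3 * Real.sin (t - π/3)))
            / (6 * qq (t - π/3) ^ 3) * 1) t :=
      (hasDeriv_FF (t - π/3)).comp (h₂ := FF) t ((hasDerivAt_id' t).sub_const (π/3))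
    have total := ((h1.add (h2.div_const 6)).add h3).div_const (12*π)
    show HasDerivAt
      (fun x : ℝ => (x + Real.sin (2*x)/6 + FF (x - π/3)) / (12*π)) (gg t) t
    refine total.congr_deriv ?_
    rw [gg]
    ring
  rw [intervalIntegral.integral_congr (g := gg) (fun x _ => pointwise x),
    intervalIntegral.integral_eq_sub_of_hasDerivAt hder
      (hcont.intervalIntegrable 0 (π/3))]
  -- endpoint values
  have hb : Real.sqrt 3 ^ 2 = 3 := Real.sq_sqrt (by norm_num)
  have hb0 : Real.sqrt 3 ≠ 0 := by positivity
  have e0 : (π/3 : ℝ) - π/3 = 0 := by ring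
  have em : (0:ℝ) - π/3 = -(π/3) := by ring
  have hq0 : qq 0 = Real.sqrt 3 := by
    rw [qq, Real.cos_zero]; norm_num
  have hqm : qq (-(π/3)) = 3/2 := by
    rw [qq, Real.cos_neg, Real.cos_pi_div_three]
    rw [show (2 + (1/2:ℝ)^2) = (3/2)^2 by norm_num, Real.sqrt_sq (by norm_num)]
  have harc1 : Real.arcsin ((1:ℝ)/2) = π/6 := by
    rw [show (1/2:ℝ) = Real.sin (π/6) from Real.sin_pi_div_six.symm,
      Real.arcsin_sin (by linarith) (by linarith)]
  have hFF0 : FF 0 = 1/2 := by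
    rw [FF, hq0, Real.sin_zero, Real.cos_zero, zero_div, Real.arcsin_zero]
    rw [show Real.sqrt 3 * 1 * Real.sqrt 3 = Real.sqrt 3 ^ 2 by ring, hb]
    field_simp
    norm_num
    ring
  have hFFm : FF (-(π/3)) = π/6 - Real.sqrt 3/12 := by
    rw [FF, hqm, Real.sin_neg, Real.cos_neg, Real.sin_pi_div_three, Real.cos_pi_div_three]
    rw [show -(Real.sqrt 3/2) / Real.sqrt 3 = -(1/2) by field_simp,
      Real.arcsin_neg, harc1]
    nlinarith [hb]
  have hsin23 : Real.sin (2*(π/3)) = Real.sqrt 3 / 2 := by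
    rw [show 2*(π/3) = π - π/3 by ring, Real.sin_pi_sub, Real.sin_pi_div_three]
  rw [PP, PP, e0, em, hFF0, hFFm, hsin23, show (2:ℝ)*0 = 0 by ring, Real.sin_zero]
  field_simp
  ring
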